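/- (Barnes' first lemma) Let a, b, c, d be complex numbers with Re(a), Re(b), Re(c), Re(d) all positive. Then (1/2π) · ∫_{-∞}^{∞} Γ(a + i·t)·Γ(b + i·t)·Γ(c − i·t)·Γ(d − i·t) dt = Γ(a+c)·Γ(a+d)·Γ(b+c)·Γ(b+d) / Γ(a+b+c+d). -/

import Mathlib

open MeasureTheory Complex Real

open Set Filter FourierTransform intervalIntegral

noncomputable def bfl (p q : ℂ) (u : ℝ) : ℂ :=
  Complex.exp (p * u) * ((1 + Real.exp u : ℝ) : ℂ) ^ (-(p + q))

lemma cpow_ofReal_pos {x : ℝ} (hx : 0 < x) (s : ℂ) :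
    ((x : ℂ)) ^ s = Complex.exp (s * (Real.log x : ℂ)) := by
  rw [Complex.cpow_def_of_ne_zero (by exact_mod_cast hx.ne'), Complex.ofReal_log hx.le, mul_comm]

lemma ofReal_pos_eq_cexp {x : ℝ} (hx : 0 < x) :
    ((x : ℂ)) = Complex.exp ((Real.log x : ℂ)) := by
  rw [← Complex.ofReal_exp, Real.exp_log hx]

lemma bfl_eq_exp (p q : ℂ) (u : ℝ) :
    bfl p q u = Complex.exp (p * u - (p + q) * (Real.log (1 + Real.exp u) : ℂ)) := by
  rw [bfl, cpow_ofReal_pos (by positivity), ← Complex.exp_add]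
  ring_nf

lemma bfl_norm (p q : ℂ) (u : ℝ) :
    ‖bfl p q u‖ = Real.exp (p.re * u - (p + q).re * Real.log (1 + Real.exp u)) := by
  rw [bfl_eq_exp, Complex.norm_exp]
  congr 1
  simp [Complex.sub_re, Complex.mul_re]

lemma bfl_continuous (p q : ℂ) : Continuous (bfl p q) := by
  simp only [funext (bfl_eq_exp p q)]
  refine Complex.continuous_exp.comp (Continuous.sub (by fun_prop) (Continuous.mul continuous_const ?_))
  exact Complex.continuous_ofReal.comp (((continuous_const.add Real.continuous_exp).log) (fun x => (by positivity : (0:ℝ) < 1 + Real.exp x).ne'))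

lemma bfl_integrable {p q : ℂ} (hp : 0 < p.re) (hq : 0 < q.re) :
    Integrable (bfl p q) := by
  have hmeas : AEStronglyMeasurable (bfl p q) volume := (bfl_continuous p q).aestronglyMeasurable
  rw [← integrableOn_univ, ← Set.Iic_union_Ioi (a := (0:ℝ))]
  refine IntegrableOn.union ?_ ?_
  · refine Integrable.mono' (integrableOn_exp_mul_Iic hp 0) hmeas.restrict ?_
    filter_upwards [ae_restrict_mem measurableSet_Iic] with u _
    rw [bfl_norm, Real.exp_le_exp]
    have hlog : 0 ≤ Real.log (1 + Real.exp u) :=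
      Real.log_nonneg (by nlinarith [Real.exp_pos u])
    have : 0 < (p+q).re := by simp [Complex.add_re]; linarith
    nlinarith
  · refine Integrable.mono' (exp_neg_integrableOn_Ioi 0 hq) hmeas.restrict ?_
    filter_upwards [ae_restrict_mem measurableSet_Ioi] with u hu
    rw [bfl_norm, Real.exp_le_exp]
    have hlog : u ≤ Real.log (1 + Real.exp u) := by
      have h := Real.log_le_log (Real.exp_pos u)
        (le_add_of_nonneg_left zero_le_one : Real.exp u ≤ 1 + Real.exp u)
      rwa [Real.log_exp] at h
    have hu' : (0:ℝ) < u := hu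
    have hpq : 0 < (p+q).re := by simp [Complex.add_re]; linarith
    have := Complex.add_re p q
    nlinarith

lemma Gamma_pos_ne_zero {s : ℂ} (hs : 0 < s.re) : Complex.Gamma s ≠ 0 := by
  apply Complex.Gamma_ne_zero
  intro m hm
  rw [hm] at hs
  simp at hs
  have : (0:ℝ) ≤ m := Nat.cast_nonneg m
  linarith

lemma bfl_integral {p q : ℂ} (hp : 0 < p.re) (hq : 0 < q.re) :
    ∫ u : ℝ, bfl p q u = Complex.Gamma p * Complex.Gamma q / Complex.Gamma (p + q) := by
  have hpq : (0:ℝ) < (p+q).re := by simp [Complex.add_re]; linarith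
  have hbeta : Complex.betaIntegral p q
      = Complex.Gamma p * Complex.Gamma q / Complex.Gamma (p + q) := by
    have h := Complex.Gamma_mul_Gamma_eq_betaIntegral hp hq
    field_simp [Gamma_pos_ne_zero hpq]
    linear_combination -h
  set φ : ℝ → ℝ := fun u => Real.exp u / (1 + Real.exp u) with hφ
  have hA : ∀ u : ℝ, (0:ℝ) < 1 + Real.exp u := fun u => by positivity
  have hφd : ∀ u : ℝ, HasDerivAt φ (Real.exp u / (1 + Real.exp u)^2) u := by
    intro u
    have h1 : HasDerivAt (fun u : ℝ => Real.exp u) (Real.exp u) u := Real.hasDerivAt_exp u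
    have h2 : HasDerivAt (fun u : ℝ => 1 + Real.exp u) (Real.exp u) u := h1.const_add 1
    have := h1.div h2 (hA u).ne'
    refine this.congr_deriv ?_
    ring
  have hinj : InjOn φ univ := by
    intro x _ y _ hxy
    simp only [hφ] at hxy
    rw [div_eq_div_iff (hA x).ne' (hA y).ne'] at hxy
    have : Real.exp x = Real.exp y := by nlinarith
    exact Real.exp_injective this
  have himg : φ '' univ = Ioo 0 1 := by
    ext t
    simp only [image_univ, mem_range, mem_Ioo]
    constructor
    · rintro ⟨u, rfl⟩
      constructor
      · positivity
      · rw [div_lt_one (hA u)]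
        nlinarith [Real.exp_pos u]
    · rintro ⟨h0, h1⟩
      refine ⟨Real.log (t / (1 - t)), ?_⟩
      have ht1 : (0:ℝ) < 1 - t := by linarith
      have : Real.exp (Real.log (t / (1 - t))) = t / (1 - t) :=
        Real.exp_log (by positivity)
      simp only [hφ, this]
      field_simp
      ring
  calc ∫ u : ℝ, bfl p q u
      = ∫ u in univ, |Real.exp u / (1 + Real.exp u)^2|
          • ((φ u : ℂ) ^ (p - 1) * ((1:ℂ) - (φ u : ℂ)) ^ (q - 1)) := by
        rw [setIntegral_univ]
        congr 1 with u
        have hE := Real.exp_pos u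
        have ht0 : (0:ℝ) < φ u := by positivity
        have ht1 : (0:ℝ) < 1 - φ u := by
          simp only [hφ]
          rw [sub_pos, div_lt_one (hA u)]
          nlinarith
        have h1mφ : ((1:ℂ) - (φ u : ℂ)) = ((1 - φ u : ℝ) : ℂ) := by push_cast; ring
        rw [h1mφ, cpow_ofReal_pos ht0, cpow_ofReal_pos ht1, abs_of_pos (by positivity),
          Complex.real_smul, ofReal_pos_eq_cexp (by positivity : (0:ℝ) < Real.exp u / (1 + Real.exp u)^2),
          bfl_eq_exp, ← Complex.exp_add, ← Complex.exp_add]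
        congr 1
        have hlog1 : Real.log (Real.exp u / (1 + Real.exp u)^2)
            = u - 2 * Real.log (1 + Real.exp u) := by
          rw [Real.log_div (by positivity) (by positivity), Real.log_exp, Real.log_pow]
          push_cast; ring
        have hlog2 : Real.log (φ u) = u - Real.log (1 + Real.exp u) := by
          simp only [hφ]
          rw [Real.log_div (by positivity) (hA u).ne', Real.log_exp]
        have hlog3 : Real.log (1 - φ u) = - Real.log (1 + Real.exp u) := by
          have : 1 - φ u = (1 + Real.exp u)⁻¹ := by
            simp only [hφ]
            field_simp
            ring
          rw [this, Real.log_inv]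
        rw [hlog1, hlog2, hlog3]
        push_cast
        ring
    _ = ∫ x in φ '' univ, ((x : ℂ) ^ (p - 1) * ((1:ℂ) - (x : ℂ)) ^ (q - 1)) := by
        rw [integral_image_eq_integral_abs_deriv_smul MeasurableSet.univ
          (fun x _ => (hφd x).hasDerivWithinAt) hinj]
    _ = Complex.betaIntegral p q := by
        rw [himg, Complex.betaIntegral, intervalIntegral.integral_of_le zero_le_one,
          integral_Ioc_eq_integral_Ioo]
    _ = _ := hbeta

lemma bfl_fourier {p q : ℂ} (hp : 0 < p.re) (hq : 0 < q.re) (ξ : ℝ) :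
    𝓕 (bfl p q) ξ = Complex.Gamma (p - (2 * π * ξ : ℝ) * I) *
      Complex.Gamma (q + (2 * π * ξ : ℝ) * I) / Complex.Gamma (p + q) := by
  rw [Real.fourier_real_eq_integral_exp_smul]
  have hre1 : 0 < (p - (2 * π * ξ : ℝ) * I).re := by
    simpa using hp
  have hre2 : 0 < (q + (2 * π * ξ : ℝ) * I).re := by
    simpa using hq
  have key : ∀ v : ℝ, Complex.exp (↑(-2 * π * v * ξ) * I) • bfl p q v
      = bfl (p - (2 * π * ξ : ℝ) * I) (q + (2 * π * ξ : ℝ) * I) v := by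
    intro v
    rw [smul_eq_mul, bfl_eq_exp, bfl_eq_exp, ← Complex.exp_add]
    congr 1
    push_cast
    ring
  rw [integral_congr_ae (Filter.Eventually.of_forall key), bfl_integral hre1 hre2]
  congr 2
  ring

lemma bfl_hasDerivAt (p q : ℂ) (u : ℝ) :
    HasDerivAt (bfl p q) (p * bfl p q u - (p + q) * bfl (p + 1) q u) u := by
  have hA : (0:ℝ) < 1 + Real.exp u := by positivity
  have h0 : HasDerivAt (fun v : ℝ => (v : ℂ)) 1 u := by
    simpa using (hasDerivAt_id u).ofReal_comp
  have h1 : HasDerivAt (fun v : ℝ => Complex.exp (p * v)) (p * Complex.exp (p * u)) u := by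
    have := (h0.const_mul p).cexp
    simpa [mul_comm] using this
  have h2 : HasDerivAt (fun v : ℝ => ((1 + Real.exp v : ℝ) : ℂ)) (Real.exp u) u := by
    have : HasDerivAt (fun v : ℝ => 1 + Real.exp v) (Real.exp u) u :=
      (Real.hasDerivAt_exp u).const_add 1
    simpa using this.ofReal_comp
  have h3 : HasDerivAt (fun v : ℝ => ((1 + Real.exp v : ℝ) : ℂ) ^ (-(p+q)))
      (-(p+q) * ((1 + Real.exp u : ℝ) : ℂ) ^ (-(p+q) - 1) * Real.exp u) u := by
    have hslit : ((1 + Real.exp u : ℝ) : ℂ) ∈ Complex.slitPlane := Or.inl (by simpa only [Complex.ofReal_re] using hA)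
    have hg : HasDerivAt (fun y : ℂ => y ^ (-(p+q)))
        (-(p+q) * ((1 + Real.exp u : ℝ) : ℂ) ^ (-(p+q) - 1)) ((1 + Real.exp u : ℝ) : ℂ) :=
      (Complex.hasStrictDerivAt_cpow_const hslit).hasDerivAt
    have := (hg.hasFDerivAt.restrictScalars ℝ).comp_hasDerivAt u h2
    simpa [mul_comm, mul_assoc, mul_left_comm, Function.comp_def] using this
  have := h1.mul h3
  refine this.congr_deriv ?_
  have hAne : ((1 + Real.exp u : ℝ) : ℂ) ≠ 0 := by
    exact_mod_cast hA.ne'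
  have hpow : ((1 + Real.exp u : ℝ) : ℂ) ^ (-(p+q) - 1)
      = ((1 + Real.exp u : ℝ) : ℂ) ^ (-(p+1+q)) := by
    congr 1; ring
  have hexp : Complex.exp ((p+1) * u) = Complex.exp (p * u) * Real.exp u := by
    rw [Complex.ofReal_exp, ← Complex.exp_add]
    congr 1; ring
  simp only [bfl, hpow, hexp]
  ring

lemma bfl_deriv (p q : ℂ) :
    deriv (bfl p q) = fun u => p * bfl p q u - (p + q) * bfl (p + 1) q u :=
  funext fun u => (bfl_hasDerivAt p q u).deriv

lemma bfl_differentiable (p q : ℂ) : Differentiable ℝ (bfl p q) :=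
  fun u => (bfl_hasDerivAt p q u).differentiableAt

lemma bfl_deriv_integrable {p q : ℂ} (hp : 0 < p.re) (hq : 0 < q.re) :
    Integrable (deriv (bfl p q)) := by
  rw [bfl_deriv]
  have h1 : (0:ℝ) < (p+1).re := by simp [Complex.add_re]; linarith
  exact ((bfl_integrable hp hq).const_mul p).sub ((bfl_integrable h1 hq).const_mul (p+q))

lemma fourier_continuous {f : ℝ → ℂ} (hf : Integrable f) : Continuous (𝓕 f) :=
  VectorFourier.fourierIntegral_continuous Real.continuous_fourierChar
    (by exact continuous_inner) hf

lemma fourier_norm_le {f : ℝ → ℂ} (w : ℝ) : ‖𝓕 f w‖ ≤ ∫ v, ‖f v‖ :=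
  VectorFourier.norm_fourierIntegral_le_integral_norm 𝐞 volume (innerₗ ℝ) f w

lemma bfl_fourier_integrable {p q : ℂ} (hp : 0 < p.re) (hq : 0 < q.re) :
    Integrable (𝓕 (bfl p q)) := by
  have hp1 : (0:ℝ) < (p+1).re := by simp [Complex.add_re]; linarith
  have hp2 : (0:ℝ) < (p+1+1).re := by simp [Complex.add_re]; linarith
  set f := bfl p q with hf
  have hint : Integrable f := bfl_integrable hp hq
  have hd1 : Integrable (deriv f) := bfl_deriv_integrable hp hq
  have hg : ∀ u, HasDerivAt (deriv f)
      (p * (p * bfl p q u - (p + q) * bfl (p + 1) q u)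
        - (p + q) * ((p+1) * bfl (p+1) q u - (p + 1 + q) * bfl (p + 1 + 1) q u)) u := by
    intro u
    rw [bfl_deriv]
    exact ((bfl_hasDerivAt p q u).const_mul p).sub ((bfl_hasDerivAt (p+1) q u).const_mul (p+q))
  have hd2 : Integrable (deriv (deriv f)) := by
    have : deriv (deriv f) = fun u =>
        p * (p * bfl p q u - (p + q) * bfl (p + 1) q u)
        - (p + q) * ((p+1) * bfl (p+1) q u - (p + 1 + q) * bfl (p + 1 + 1) q u) :=
      funext fun u => (hg u).deriv
    rw [this]
    exact ((((bfl_integrable hp hq).const_mul p).sub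
        ((bfl_integrable hp1 hq).const_mul (p+q))).const_mul p).sub
      ((((bfl_integrable hp1 hq).const_mul (p+1)).sub
        ((bfl_integrable hp2 hq).const_mul (p+1+q))).const_mul (p+q))
  have hF1 : 𝓕 (deriv f) = fun x : ℝ => (2 * π * I * x) • 𝓕 f x :=
    Real.fourier_deriv hint (bfl_differentiable p q) hd1
  have hF2 : 𝓕 (deriv (deriv f)) = fun x : ℝ => (2 * π * I * x) • 𝓕 (deriv f) x :=
    Real.fourier_deriv hd1 (fun u => (hg u).differentiableAt) hd2
  set B1 := ∫ v, ‖f v‖ with hB1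
  set B2 := ∫ v, ‖deriv (deriv f) v‖ with hB2
  have hB1n : 0 ≤ B1 := integral_nonneg fun v => norm_nonneg _
  have hB2n : 0 ≤ B2 := integral_nonneg fun v => norm_nonneg _
  have key : ∀ x : ℝ, (2 * π * x)^2 * ‖𝓕 f x‖ ≤ B2 := by
    intro x
    have h := fourier_norm_le (f := deriv (deriv f)) x
    rw [hF2] at h
    simp only [hF1] at h
    rw [norm_smul, norm_smul] at h
    have hn : ‖2 * (π:ℂ) * I * (x:ℂ)‖ = 2 * π * |x| := by
      simp [norm_mul, Complex.norm_real, Real.norm_eq_abs, abs_of_pos Real.pi_pos]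
    rw [hn] at h
    have hsq : (2 * π * x)^2 = (2 * π * |x|)^2 := by
      rw [mul_pow (2*π) x 2, mul_pow (2*π) |x| 2, _root_.sq_abs x]
    calc (2 * π * x)^2 * ‖𝓕 f x‖ = 2 * π * |x| * (2 * π * |x| * ‖𝓕 f x‖) := by
          rw [hsq]; ring
      _ ≤ B2 := h
  refine Integrable.mono' ((integrable_inv_one_add_sq).const_mul (2 * (B1 + B2)))
    (fourier_continuous hint).aestronglyMeasurable (Filter.Eventually.of_forall fun x => ?_)
  have hx2 : (0:ℝ) < 1 + x^2 := by positivity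
  have hfx : 0 ≤ ‖𝓕 f x‖ := norm_nonneg _
  have hb1 : ‖𝓕 f x‖ ≤ B1 := fourier_norm_le x
  rw [← div_eq_mul_inv, le_div_iff₀ hx2]
  rcases le_or_gt (x^2) 1 with hx1 | hx1
  · nlinarith
  · have hk := key x
    have hpi : (9:ℝ) ≤ π^2 := by nlinarith [Real.pi_gt_three]
    have h36 : 36 * x^2 ≤ (2*π*x)^2 := by nlinarith [mul_le_mul_of_nonneg_right hpi (sq_nonneg x)]
    nlinarith [mul_le_mul_of_nonneg_right h36 hfx,
      mul_nonneg (by linarith : (0:ℝ) ≤ x^2 - 1) hfx]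

lemma fourier_mult {f g : ℝ → ℂ} (hf : Integrable f) (hg : Integrable g) :
    ∫ ξ, 𝓕 f ξ * g ξ = ∫ x, f x * 𝓕 g x := by
  have h := VectorFourier.integral_fourierIntegral_smul_eq_flip (L := innerₗ ℝ)
    Real.continuous_fourierChar continuous_inner hf hg
  have hflip : (innerₗ ℝ).flip = innerₗ ℝ := by
    apply LinearMap.ext; intro x; apply LinearMap.ext; intro y
    simp [mul_comm]
  rw [hflip] at h
  simp only [smul_eq_mul] at h
  exact h

lemma fourier_fourier {f : ℝ → ℂ} (hc : Continuous f) (hf : Integrable f)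
    (hFf : Integrable (𝓕 f)) (u : ℝ) : 𝓕 (𝓕 f) u = f (-u) := by
  have h := Real.fourierInv_eq_fourier_neg (𝓕 f) (-u)
  rw [neg_neg] at h
  rw [← h, hc.fourierInv_fourier_eq hf hFf]

/-- Barnes' first lemma. -/
theorem barnes_first_lemma (a b c d : ℂ)
    (ha : 0 < a.re) (hb : 0 < b.re) (hc : 0 < c.re) (hd : 0 < d.re) :
    (1 / (2 * (π : ℂ))) * ∫ t : ℝ,
        Complex.Gamma (a + I * t) * Complex.Gamma (b + I * t) *
        Complex.Gamma (c - I * t) * Complex.Gamma (d - I * t) =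
      Complex.Gamma (a + c) * Complex.Gamma (a + d) * Complex.Gamma (b + c) *
        Complex.Gamma (b + d) / Complex.Gamma (a + b + c + d) := by
  have hπ : (π : ℝ) ≠ 0 := Real.pi_ne_zero
  have hac : (0:ℝ) < (a+c).re := by simp [Complex.add_re]; linarith
  have hbd : (0:ℝ) < (b+d).re := by simp [Complex.add_re]; linarith
  have had : (0:ℝ) < (a+d).re := by simp [Complex.add_re]; linarith
  have hbc : (0:ℝ) < (b+c).re := by simp [Complex.add_re]; linarith
  have habcd : (0:ℝ) < (a+b+c+d).re := by simp [Complex.add_re]; linarith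
  have hGac : Complex.Gamma (a+c) ≠ 0 := Gamma_pos_ne_zero hac
  have hGbd : Complex.Gamma (b+d) ≠ 0 := Gamma_pos_ne_zero hbd
  set f := bfl a c with hfdef
  set g := bfl b d with hgdef
  have hfint : Integrable f := bfl_integrable ha hc
  have hgint : Integrable g := bfl_integrable hb hd
  have hFg : Integrable (𝓕 g) := bfl_fourier_integrable hb hd
  set H : ℝ → ℂ := fun ξ => 𝓕 f ξ * 𝓕 g ξ with hH
  -- pointwise identification of the integrand
  have hpt : ∀ t : ℝ, Complex.Gamma (a + I * t) * Complex.Gamma (b + I * t) *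
      Complex.Gamma (c - I * t) * Complex.Gamma (d - I * t)
      = Complex.Gamma (a+c) * Complex.Gamma (b+d) * H ((-(2*π))⁻¹ * t) := by
    intro t
    have h2π : (2 * π * ((-(2*π))⁻¹ * t) : ℝ) = -t := by field_simp
    simp only [hH, hfdef, hgdef]
    rw [bfl_fourier ha hc, bfl_fourier hb hd, h2π]
    have e1 : a - ((-t : ℝ) : ℂ) * I = a + I * t := by push_cast; ring
    have e2 : c + ((-t : ℝ) : ℂ) * I = c - I * t := by push_cast; ring
    have e3 : b - ((-t : ℝ) : ℂ) * I = b + I * t := by push_cast; ring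
    have e4 : d + ((-t : ℝ) : ℂ) * I = d - I * t := by push_cast; ring
    rw [e1, e2, e3, e4]
    field_simp
  rw [integral_congr_ae (Filter.Eventually.of_forall hpt), MeasureTheory.integral_const_mul,
    Measure.integral_comp_mul_left H ((-(2*π))⁻¹)]
  have habs : |((-(2*π):ℝ))⁻¹⁻¹| = 2*π := by
    rw [inv_inv, abs_neg, abs_of_pos (by positivity)]
  rw [habs]
  -- compute ∫ H
  have hHval : ∫ ξ, H ξ = Complex.Gamma (a+d) * Complex.Gamma (b+c)
      / Complex.Gamma (a+b+c+d) := by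
    simp only [hH, hfdef, hgdef]
    have h1 : ∫ ξ, 𝓕 f ξ * 𝓕 g ξ = ∫ x, f x * 𝓕 (𝓕 g) x := fourier_mult hfint hFg
    have h2 : ∀ x : ℝ, f x * 𝓕 (𝓕 g) x = bfl (a+d) (b+c) x := by
      intro x
      simp only [hfdef, hgdef]
      rw [fourier_fourier (bfl_continuous b d) (hgdef ▸ hgint) (hgdef ▸ hFg)]
      rw [bfl_eq_exp, bfl_eq_exp, bfl_eq_exp, ← Complex.exp_add]
      congr 1
      have hE := Real.exp_pos x
      have hlog : Real.log (1 + Real.exp (-x)) = -x + Real.log (1 + Real.exp x) := by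
        have : (1 + Real.exp (-x)) = Real.exp (-x) * (1 + Real.exp x) := by
          rw [Real.exp_neg]
          field_simp
          ring
        rw [this, Real.log_mul (by positivity) (by positivity), Real.log_exp]
      rw [hlog]
      push_cast
      ring
    rw [h1, integral_congr_ae (Filter.Eventually.of_forall h2), bfl_integral had hbc]
    have : a + d + (b + c) = a + b + c + d := by ring
    rw [this]
  rw [hHval]
  have hGabcd : Complex.Gamma (a+b+c+d) ≠ 0 := Gamma_pos_ne_zero habcd
  have hsmul : ((2*π : ℝ) • (Complex.Gamma (a+d) * Complex.Gamma (b+c)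
      / Complex.Gamma (a+b+c+d)) : ℂ)
      = ((2*π : ℝ) : ℂ) * (Complex.Gamma (a+d) * Complex.Gamma (b+c)
      / Complex.Gamma (a+b+c+d)) := by
    rw [Complex.real_smul]
  rw [hsmul]
  have hπC : ((π : ℂ)) ≠ 0 := by exact_mod_cast hπ
  field_simp
  push_cast
  ring
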